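/- Let p₀, q₀, p₁, q₁, p₂, q₂ ∈ ℤ with p₁q₂ − p₂q₁ = 1, define f₀(x, y) = min(0, p₁x + q₁y, p₂x + q₂y) + p₀x + q₀y on ℤ², let C = {v : Δf₀(v) < 0}, let 𝔉_n be the set of superharmonic functions f : ℤ² → ℤ with f₀ − n ≤ f ≤ f₀ and f = f₀ outside some bounded neighborhood of C, and let f_n(v) = min_{f∈𝔉_n} f(v). If f₀ is monotone in a direction e ∈ ℤ², i.e. f₀(v + e) ≤ f₀(v) for all v ∈ ℤ², then f_n is monotone in the same direction: f_n(v + e) ≤ f_n(v) for all v ∈ ℤ². -/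

import Mathlib

/-- The discrete Laplacian on `ℤ × ℤ`: sum over the four grid neighbors minus `4` times
the value at the point. -/
def lap (H : ℤ × ℤ → ℤ) (v : ℤ × ℤ) : ℤ :=
  H (v.1 + 1, v.2) + H (v.1 - 1, v.2) + H (v.1, v.2 + 1) + H (v.1, v.2 - 1) - 4 * H v

/-- Two points of `ℤ²` are adjacent if their Euclidean distance is `1`. -/
def Adj (a b : ℤ × ℤ) : Prop :=
  (a.1 - b.1) ^ 2 + (a.2 - b.2) ^ 2 = 1

/-- Euclidean distance between two points of `ℤ²`. -/
noncomputable def dst (v w : ℤ × ℤ) : ℝ :=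
  Real.sqrt (((v.1 - w.1 : ℤ) : ℝ) ^ 2 + ((v.2 - w.2 : ℤ) : ℝ) ^ 2)

/-- The corner function `f₀(x,y) = min(0, p₁x + q₁y, p₂x + q₂y) + p₀x + q₀y`. -/
def f0 (p₀ q₀ p₁ q₁ p₂ q₂ : ℤ) (v : ℤ × ℤ) : ℤ :=
  min (min 0 (p₁ * v.1 + q₁ * v.2)) (p₂ * v.1 + q₂ * v.2) + p₀ * v.1 + q₀ * v.2

/-- The set where the Laplacian of `f₀` is negative (the discrete tropical corner). -/
def Cset (p₀ q₀ p₁ q₁ p₂ q₂ : ℤ) : Set (ℤ × ℤ) :=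
  {v | lap (f0 p₀ q₀ p₁ q₁ p₂ q₂) v < 0}

/-- The family `𝔉ₙ` of superharmonic functions squeezed between `f₀ − n` and `f₀` and
equal to `f₀` outside some bounded neighborhood of `C`. -/
def FF (p₀ q₀ p₁ q₁ p₂ q₂ : ℤ) (n : ℕ) : Set ((ℤ × ℤ) → ℤ) :=
  {f | (∀ v, lap f v ≤ 0) ∧
       (∀ v, f0 p₀ q₀ p₁ q₁ p₂ q₂ v - n ≤ f v ∧ f v ≤ f0 p₀ q₀ p₁ q₁ p₂ q₂ v) ∧
       ∃ r : ℝ, 0 < r ∧ ∀ v, (∀ c ∈ Cset p₀ q₀ p₁ q₁ p₂ q₂, r ≤ dst v c) →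
         f v = f0 p₀ q₀ p₁ q₁ p₂ q₂ v}

/-- The pointwise minimum `fₙ` of the family `𝔉ₙ`. -/
noncomputable def fmin (p₀ q₀ p₁ q₁ p₂ q₂ : ℤ) (n : ℕ) (v : ℤ × ℤ) : ℤ :=
  sInf {x : ℤ | ∃ f ∈ FF p₀ q₀ p₁ q₁ p₂ q₂ n, f v = x}


lemma lap_min (f g : ℤ × ℤ → ℤ) (hf : ∀ v, lap f v ≤ 0) (hg : ∀ v, lap g v ≤ 0) :
    ∀ v, lap (fun w => min (f w) (g w)) v ≤ 0 := by
  intro v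
  have h1 := min_le_left (f (v.1 + 1, v.2)) (g (v.1 + 1, v.2))
  have h2 := min_le_left (f (v.1 - 1, v.2)) (g (v.1 - 1, v.2))
  have h3 := min_le_left (f (v.1, v.2 + 1)) (g (v.1, v.2 + 1))
  have h4 := min_le_left (f (v.1, v.2 - 1)) (g (v.1, v.2 - 1))
  have h1' := min_le_right (f (v.1 + 1, v.2)) (g (v.1 + 1, v.2))
  have h2' := min_le_right (f (v.1 - 1, v.2)) (g (v.1 - 1, v.2))
  have h3' := min_le_right (f (v.1, v.2 + 1)) (g (v.1, v.2 + 1))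
  have h4' := min_le_right (f (v.1, v.2 - 1)) (g (v.1, v.2 - 1))
  have hf' := hf v
  have hg' := hg v
  rcases min_cases (f v) (g v) with ⟨h, _⟩ | ⟨h, _⟩ <;>
    simp only [lap] at * <;> omega

lemma lap_linear (a b : ℤ) (v : ℤ × ℤ) : lap (fun w => a * w.1 + b * w.2) v = 0 := by
  simp only [lap]; ring

lemma f0_eq (p₀ q₀ p₁ q₁ p₂ q₂ : ℤ) :
    f0 p₀ q₀ p₁ q₁ p₂ q₂ = fun v =>
      min (min (p₀ * v.1 + q₀ * v.2) ((p₁ + p₀) * v.1 + (q₁ + q₀) * v.2))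
        ((p₂ + p₀) * v.1 + (q₂ + q₀) * v.2) := by
  funext v
  simp only [f0]
  rw [add_assoc, ← min_add_add_right, ← min_add_add_right]
  ring_nf

lemma lap_f0 (p₀ q₀ p₁ q₁ p₂ q₂ : ℤ) (v : ℤ × ℤ) : lap (f0 p₀ q₀ p₁ q₁ p₂ q₂) v ≤ 0 := by
  rw [f0_eq]
  exact lap_min _ _
    (lap_min _ _ (fun w => le_of_eq (lap_linear _ _ w)) (fun w => le_of_eq (lap_linear _ _ w)))
    (fun w => le_of_eq (lap_linear _ _ w)) v

lemma f0_mem_FF (p₀ q₀ p₁ q₁ p₂ q₂ : ℤ) (n : ℕ) :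
    f0 p₀ q₀ p₁ q₁ p₂ q₂ ∈ FF p₀ q₀ p₁ q₁ p₂ q₂ n := by
  refine ⟨lap_f0 _ _ _ _ _ _, fun v => ⟨by omega, le_refl _⟩, 1, one_pos, fun v _ => rfl⟩

lemma lap_shift (f : ℤ × ℤ → ℤ) (e : ℤ × ℤ) (v : ℤ × ℤ) :
    lap (fun w => f (w - e)) v = lap f (v - e) := by
  simp only [lap, Prod.sub_def]
  ring_nf

noncomputable def cz (v : ℤ × ℤ) : ℂ := Complex.mk (v.1 : ℝ) (v.2 : ℝ)

lemma dst_eq (v w : ℤ × ℤ) : dst v w = ‖cz v - cz w‖ := by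
  simp only [dst, cz, Complex.norm_def, Complex.normSq_apply, Complex.sub_re, Complex.sub_im]
  push_cast
  ring_nf

lemma dst_triangle (a b c : ℤ × ℤ) : dst a c ≤ dst a b + dst b c := by
  simp only [dst_eq]
  exact norm_sub_le_norm_sub_add_norm_sub (cz a) (cz b) (cz c)

lemma dst_shift (v e : ℤ × ℤ) :
    dst v (v - e) = Real.sqrt (((e.1 : ℝ)) ^ 2 + ((e.2 : ℝ)) ^ 2) := by
  simp only [dst, Prod.fst_sub, Prod.snd_sub]
  push_cast
  ring_nf


/-- If `f₀` is monotone in a direction `e ∈ ℤ²`, then the pointwise minimizer `fₙ` of the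
family `𝔉ₙ` is monotone in the same direction. -/
theorem fmin_monotone (p₀ q₀ p₁ q₁ p₂ q₂ : ℤ)
    (hdet : p₁ * q₂ - p₂ * q₁ = 1) (n : ℕ) (e : ℤ × ℤ)
    (hmono : ∀ v : ℤ × ℤ, f0 p₀ q₀ p₁ q₁ p₂ q₂ (v + e) ≤ f0 p₀ q₀ p₁ q₁ p₂ q₂ v) :
    ∀ v : ℤ × ℤ,
      fmin p₀ q₀ p₁ q₁ p₂ q₂ n (v + e) ≤ fmin p₀ q₀ p₁ q₁ p₂ q₂ n v := by
  intro v
  -- key: translate-and-min construction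
  have key : ∀ f ∈ FF p₀ q₀ p₁ q₁ p₂ q₂ n,
      (fun w => min (f w) (f (w - e))) ∈ FF p₀ q₀ p₁ q₁ p₂ q₂ n := by
    rintro f ⟨hlap, hbd, r, hr, hfar⟩
    refine ⟨?_, ?_, ?_⟩
    · exact lap_min f (fun w => f (w - e)) hlap
        (fun w => by rw [lap_shift]; exact hlap _)
    · intro w
      have h1 := hbd w
      have h2 := hbd (w - e)
      have h3 : f0 p₀ q₀ p₁ q₁ p₂ q₂ w ≤ f0 p₀ q₀ p₁ q₁ p₂ q₂ (w - e) := by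
        have := hmono (w - e)
        rwa [sub_add_cancel] at this
      constructor
      · exact le_min (by omega) (by omega)
      · exact le_trans (min_le_left _ _) h1.2
    · refine ⟨r + Real.sqrt (((e.1 : ℝ)) ^ 2 + ((e.2 : ℝ)) ^ 2) , ?_, ?_⟩
      · have := Real.sqrt_nonneg (((e.1 : ℝ)) ^ 2 + ((e.2 : ℝ)) ^ 2)
        linarith
      · intro w hw
        have hs := Real.sqrt_nonneg (((e.1 : ℝ)) ^ 2 + ((e.2 : ℝ)) ^ 2)
        have hfw : f w = f0 p₀ q₀ p₁ q₁ p₂ q₂ w := hfar w (fun c hc => by linarith [hw c hc])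
        have hfw' : f (w - e) = f0 p₀ q₀ p₁ q₁ p₂ q₂ (w - e) := by
          refine hfar (w - e) (fun c hc => ?_)
          have ht := dst_triangle w (w - e) c
          rw [dst_shift] at ht
          have := hw c hc
          linarith
        have h3 : f0 p₀ q₀ p₁ q₁ p₂ q₂ w ≤ f0 p₀ q₀ p₁ q₁ p₂ q₂ (w - e) := by
          have := hmono (w - e)
          rwa [sub_add_cancel] at this
        simp only [hfw, hfw']
        exact min_eq_left h3
  -- the defining set at any point is nonempty and bounded below
  have hne : ∀ u : ℤ × ℤ, {x : ℤ | ∃ f ∈ FF p₀ q₀ p₁ q₁ p₂ q₂ n, f u = x}.Nonempty :=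
    fun u => ⟨f0 p₀ q₀ p₁ q₁ p₂ q₂ u, f0 p₀ q₀ p₁ q₁ p₂ q₂, f0_mem_FF _ _ _ _ _ _ n, rfl⟩
  have hbdd : ∀ u : ℤ × ℤ, BddBelow {x : ℤ | ∃ f ∈ FF p₀ q₀ p₁ q₁ p₂ q₂ n, f u = x} := by
    intro u
    refine ⟨f0 p₀ q₀ p₁ q₁ p₂ q₂ u - n, ?_⟩
    rintro x ⟨f, ⟨_, hbd, _⟩, rfl⟩
    exact (hbd u).1
  apply le_csInf (hne v)
  rintro x ⟨f, hf, rfl⟩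
  have hg := key f hf
  have : fmin p₀ q₀ p₁ q₁ p₂ q₂ n (v + e) ≤ min (f (v + e)) (f ((v + e) - e)) :=
    csInf_le (hbdd (v + e)) ⟨_, hg, rfl⟩
  have hve : (v + e) - e = v := by ring
  rw [hve] at this
  exact le_trans this (min_le_right _ _)
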